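/- arXiv:0805.1762 — 4 statements merged into one kernel-verified Lean document; each statement's English description precedes it below -/
import Mathlib

section
/- Let G be a finite simple graph with base vertex v₀, and let u, v be vertices of G joined by a path in G. If q and q' are monomials in the variables q_A with φ_G(q) = φ_G(q'), then h_{u,v}(q) ≡ h_{u,v}(q') (mod 2). -/
open MvPolynomial

noncomputable section

/-- `sep A e` is `true` iff the edge `e` has exactly one endpoint in `A`. -/
def sep {V : Type} [DecidableEq V] (A : Finset V) : Sym2 V → Bool :=
  Sym2.lift ⟨fun a b => (decide (a ∈ A)).xor (decide (b ∈ A)),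
    fun _ _ => Bool.xor_comm _ _⟩

/-- The cut map `φ_G : K[q_A : v₀ ∈ A ⊆ V] → K[s_e, t_e : e ∈ E]`, where
`s_e` is the variable `X (e, true)` and `t_e` is the variable `X (e, false)`. -/
def cutMap (K : Type) [Field K] {V : Type} [Fintype V] [DecidableEq V]
    (G : SimpleGraph V) (v₀ : V) :
    MvPolynomial {A : Finset V // v₀ ∈ A} K →ₐ[K] MvPolynomial (Sym2 V × Bool) K :=
  aeval fun A : {A : Finset V // v₀ ∈ A} =>
    ∏ e ∈ (Set.toFinite G.edgeSet).toFinset, X (e, sep A.1 e)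

/-- The monomial `q_{A₁} ⋯ q_{Aₙ}` associated to a multiset of cut index sets. -/
def mon (K : Type) [Field K] {V : Type} {v₀ : V}
    (m : Multiset {A : Finset V // v₀ ∈ A}) :
    MvPolynomial {A : Finset V // v₀ ∈ A} K :=
  (m.map X).prod

/-- The height `h_{u,v}` of a monomial `q_{A₁} ⋯ q_{Aₙ}`: the number of `i` such that
exactly one of `u`, `v` belongs to `Aᵢ`. -/
def height {V : Type} [DecidableEq V] (u v : V) {v₀ : V}
    (m : Multiset {A : Finset V // v₀ ∈ A}) : ℕ :=
  Multiset.card (m.filter fun A => sep A.1 s(u, v) = true)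

lemma sep_mk {V : Type} [DecidableEq V] (A : Finset V) (a b : V) :
    sep A s(a, b) = (decide (a ∈ A)).xor (decide (b ∈ A)) := rfl

lemma sep_diag {V : Type} [DecidableEq V] (A : Finset V) (u : V) :
    sep A s(u, u) = false := by simp [sep_mk]

lemma sep_trans {V : Type} [DecidableEq V] (A : Finset V) (u w v : V) :
    sep A s(u, v) = (sep A s(u, w)).xor (sep A s(w, v)) := by
  simp only [sep_mk]
  cases decide (u ∈ A) <;> cases decide (w ∈ A) <;> cases decide (v ∈ A) <;> rfl

/-- The exponent vector of the image monomial. -/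
def expv {V : Type} [Fintype V] [DecidableEq V] (G : SimpleGraph V) {v₀ : V}
    (m : Multiset {A : Finset V // v₀ ∈ A}) : (Sym2 V × Bool) →₀ ℕ :=
  (m.map fun A => ∑ e ∈ (Set.toFinite G.edgeSet).toFinset,
    Finsupp.single (e, sep A.1 e) 1).sum

lemma expv_cons {V : Type} [Fintype V] [DecidableEq V] (G : SimpleGraph V) {v₀ : V}
    (A : {A : Finset V // v₀ ∈ A}) (s : Multiset {A : Finset V // v₀ ∈ A}) :
    expv G (A ::ₘ s) = (∑ e ∈ (Set.toFinite G.edgeSet).toFinset,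
      Finsupp.single (e, sep A.1 e) 1) + expv G s := by
  simp [expv]

lemma height_cons {V : Type} [DecidableEq V] (u v : V) {v₀ : V}
    (A : {A : Finset V // v₀ ∈ A}) (s : Multiset {A : Finset V // v₀ ∈ A}) :
    height u v (A ::ₘ s) = (if sep A.1 s(u, v) = true then 1 else 0) + height u v s := by
  simp only [height, Multiset.filter_cons]
  split <;> simp [Nat.add_comm]

lemma height_self {V : Type} [DecidableEq V] (u : V) {v₀ : V}
    (x : Multiset {A : Finset V // v₀ ∈ A}) : height u u x = 0 := by
  rw [height, Multiset.card_eq_zero, Multiset.filter_eq_nil]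
  intro A _
  rw [sep_diag]
  simp

lemma cutMap_mon (K : Type) [Field K] {V : Type} [Fintype V] [DecidableEq V]
    (G : SimpleGraph V) (v₀ : V) (m : Multiset {A : Finset V // v₀ ∈ A}) :
    cutMap K G v₀ (mon K m) = monomial (expv G m) 1 := by
  induction m using Multiset.induction with
  | empty => simp [mon, expv]
  | cons A s ih =>
    rw [mon, Multiset.map_cons, Multiset.prod_cons, map_mul, ← mon, ih, expv_cons]
    rw [show (cutMap K G v₀) (X A) = ∏ e ∈ (Set.toFinite G.edgeSet).toFinset,
        X (e, sep A.1 e) from aeval_X _ A]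
    have : (∏ e ∈ (Set.toFinite G.edgeSet).toFinset, (X (e, sep A.1 e) :
        MvPolynomial (Sym2 V × Bool) K)) =
        monomial (∑ e ∈ (Set.toFinite G.edgeSet).toFinset,
          Finsupp.single (e, sep A.1 e) 1) 1 := by
      rw [monomial_sum_one]
      exact Finset.prod_congr rfl fun e _ => rfl
    rw [this, monomial_mul, mul_one]

lemma expv_apply {V : Type} [Fintype V] [DecidableEq V] (G : SimpleGraph V) {v₀ : V}
    (m : Multiset {A : Finset V // v₀ ∈ A}) (u v : V) (h : G.Adj u v) :
    expv G m (s(u, v), true) = height u v m := by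
  induction m using Multiset.induction with
  | empty => simp [expv, height]
  | cons A s ih =>
    have he : s(u, v) ∈ (Set.toFinite G.edgeSet).toFinset := by
      simpa [Set.Finite.mem_toFinset] using h
    rw [expv_cons, Finsupp.add_apply, ih, height_cons]
    congr 1
    rw [Finsupp.finset_sum_apply]
    rw [Finset.sum_eq_single s(u, v)]
    · rw [Finsupp.single_apply]
      by_cases hs : sep A.1 s(u, v) = true <;> simp [hs]
    · intro e _ hne
      rw [Finsupp.single_apply, if_neg (by simp [hne])]
    · intro hc; exact absurd he hc

lemma height_triangle {V : Type} [DecidableEq V] (u w v : V) {v₀ : V}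
    (m : Multiset {A : Finset V // v₀ ∈ A}) :
    height u w m + height w v m ≡ height u v m [MOD 2] := by
  induction m using Multiset.induction with
  | empty => rfl
  | cons A s ih =>
    have hc := sep_trans A.1 u w v
    simp only [height, Multiset.filter_cons] at *
    unfold Nat.ModEq at *
    cases h1 : sep A.1 s(u, w) <;> cases h2 : sep A.1 s(w, v) <;>
      rw [h1, h2] at hc <;> simp [h1, h2, hc] <;> omega

/-- Lemma 2.4: if there is a path from `u` to `v` in `G` and `q`, `q'` are monomials with
`φ_G(q) = φ_G(q')`, then `h_{u,v}(q) ≡ h_{u,v}(q')` mod `2`. -/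
theorem height_congr_of_cutMap_eq
    (K : Type) [Field K] {V : Type} [Fintype V] [DecidableEq V]
    (G : SimpleGraph V) (v₀ : V) (u v : V) (hpath : G.Reachable u v)
    (m m' : Multiset {A : Finset V // v₀ ∈ A})
    (heq : cutMap K G v₀ (mon K m) = cutMap K G v₀ (mon K m')) :
    height u v m ≡ height u v m' [MOD 2] := by
  have hD : expv G m = expv G m' := by
    rw [cutMap_mon, cutMap_mon] at heq
    exact monomial_left_injective one_ne_zero heq
  have hadj : ∀ a b : V, G.Adj a b → height a b m = height a b m' := by
    intro a b hab
    rw [← expv_apply G m a b hab, ← expv_apply G m' a b hab, hD]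
  obtain ⟨p⟩ := hpath
  clear heq
  induction p with
  | nil => rw [height_self, height_self]
  | @cons a b c hab p ih =>
    have h1 := height_triangle a b c m
    have h2 := height_triangle a b c m'
    have h3 := hadj a b hab
    have h4 := ih
    unfold Nat.ModEq at *
    omega

end
end

section
/- Let G be a finite simple graph with two distinct non-adjacent vertices u, v and subsets L, R ⊆ V(G) with L ∪ R = V(G), L ∩ R = {u, v}, such that every edge of G has both endpoints in L or both endpoints in R; index cuts of G by subsets containing the base vertex u. Let A₁ and A₂ be cut index sets of G with v ∈ A₁ if and only if v ∈ A₂, and set A₁' = (A₁ ∩ L) ∪ (A₂ ∩ R) and A₂' = (A₂ ∩ L) ∪ (A₁ ∩ R). Then the quadratic binomial q_{A₁}q_{A₂} − q_{A₁'}q_{A₂'} belongs to the cut ideal I_G. -/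
open MvPolynomial

noncomputable section

/-- The cut ideal `I_G`, i.e. the kernel of `φ_G`. -/
def cutIdeal (K : Type) [Field K] {V : Type} [Fintype V] [DecidableEq V]
    (G : SimpleGraph V) (v₀ : V) :
    Ideal (MvPolynomial {A : Finset V // v₀ ∈ A} K) :=
  RingHom.ker (cutMap K G v₀)

/-- If `G` decomposes over `{u, v}` into a left part `L` and a right part `R`, and the
cut index sets `A₁`, `A₂` (containing the base vertex `u`) agree on whether they contain
`v`, then the quadratic sorting binomial
`q_{A₁} q_{A₂} - q_{(A₁∩L)∪(A₂∩R)} q_{(A₂∩L)∪(A₁∩R)}` lies in the cut ideal `I_G`. -/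
theorem sorting_binomial_mem_cutIdeal
    (K : Type) [Field K] {V : Type} [Fintype V] [DecidableEq V]
    (G : SimpleGraph V) (u v : V) (huv : u ≠ v) (hadj : ¬ G.Adj u v)
    (L R : Finset V) (hLR : L ∪ R = Finset.univ) (hI : L ∩ R = {u, v})
    (huL : u ∈ L) (huR : u ∈ R)
    (hE : ∀ a b, G.Adj a b → (a ∈ L ∧ b ∈ L) ∨ (a ∈ R ∧ b ∈ R))
    (A₁ A₂ : {A : Finset V // u ∈ A}) (hv : v ∈ A₁.1 ↔ v ∈ A₂.1) :
    X A₁ * X A₂ -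
      X (⟨(A₁.1 ∩ L) ∪ (A₂.1 ∩ R),
            Finset.mem_union_left _ (Finset.mem_inter_of_mem A₁.2 huL)⟩ :
          {A : Finset V // u ∈ A}) *
      X (⟨(A₂.1 ∩ L) ∪ (A₁.1 ∩ R),
            Finset.mem_union_left _ (Finset.mem_inter_of_mem A₂.2 huL)⟩ :
          {A : Finset V // u ∈ A}) ∈
      cutIdeal K G u := by
  have hLRmem : ∀ a, a ∈ L → a ∈ R → (a ∈ A₁.1 ↔ a ∈ A₂.1) := by
    intro a haL haR
    have h : a ∈ ({u, v} : Finset V) := hI ▸ Finset.mem_inter.mpr ⟨haL, haR⟩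
    rcases Finset.mem_insert.mp h with rfl | h
    · simp [A₁.2, A₂.2]
    · rw [Finset.mem_singleton.mp h]; exact hv
  have gen : ∀ (B C : Finset V), (∀ a, a ∈ L → a ∈ R → (a ∈ B ↔ a ∈ C)) →
      (∀ a ∈ L, (a ∈ B ∩ L ∪ C ∩ R ↔ a ∈ B)) ∧
      (∀ a ∈ R, (a ∈ B ∩ L ∪ C ∩ R ↔ a ∈ C)) := by
    intro B C hBC
    constructor
    · intro a haL
      simp only [Finset.mem_union, Finset.mem_inter]
      constructor
      · rintro (⟨h, _⟩ | ⟨h, haR⟩)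
        · exact h
        · exact (hBC a haL haR).mpr h
      · intro h; exact Or.inl ⟨h, haL⟩
    · intro a haR
      simp only [Finset.mem_union, Finset.mem_inter]
      constructor
      · rintro (⟨h, haL⟩ | ⟨h, _⟩)
        · exact (hBC a haL haR).mp h
        · exact h
      · intro h; exact Or.inr ⟨h, haR⟩
  obtain ⟨h1L, h1R⟩ := gen A₁.1 A₂.1 hLRmem
  obtain ⟨h2L, h2R⟩ := gen A₂.1 A₁.1 fun a haL haR => (hLRmem a haL haR).symm
  have sepA : ∀ (B B' : Finset V) (a b : V), (a ∈ B ↔ a ∈ B') → (b ∈ B ↔ b ∈ B') →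
      sep B s(a, b) = sep B' s(a, b) := by
    intro B B' a b ha hb
    simp only [sep, Sym2.lift_mk]
    rw [decide_eq_decide.mpr ha, decide_eq_decide.mpr hb]
  rw [cutIdeal, RingHom.mem_ker, map_sub, sub_eq_zero, map_mul, map_mul]
  simp only [cutMap, aeval_X]
  rw [← Finset.prod_mul_distrib, ← Finset.prod_mul_distrib]
  refine Finset.prod_congr rfl fun e he => ?_
  have he' : e ∈ G.edgeSet := (Set.Finite.mem_toFinset _).mp he
  induction e using Sym2.ind with
  | _ a b =>
    have hab : G.Adj a b := he'
    rcases hE a b hab with ⟨haL, hbL⟩ | ⟨haR, hbR⟩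
    · rw [sepA _ A₁.1 a b (h1L a haL) (h1L b hbL),
        sepA _ A₂.1 a b (h2L a haL) (h2L b hbL)]
    · rw [sepA _ A₂.1 a b (h1R a haR) (h1R b hbR),
        sepA _ A₁.1 a b (h2R a haR) (h2R b hbR), mul_comm]

end
end

section
/- Let G be a finite simple graph with two distinct non-adjacent vertices u, v and subsets L, R ⊆ V(G) with L ∪ R = V(G), L ∩ R = {u, v}, such that every edge of G has both endpoints in L or both endpoints in R; index cuts of G, of G[L], and of G[L]+uv by subsets containing the base vertex u. Let C₁, …, C_m and C₁', …, C_m' be cut index sets of G with Cᵢ ∩ R = Cᵢ' ∩ R for all i. If ∏_{i=1}^m q_{Cᵢ∩L} − ∏_{i=1}^m q_{Cᵢ'∩L} belongs to the cut ideal I_{G[L]+uv}, then ∏_{i=1}^m q_{Cᵢ} − ∏_{i=1}^m q_{Cᵢ'} belongs to the cut ideal I_G. -/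
open MvPolynomial

noncomputable section

/-- `G + uv`: the graph `G` with the edge `uv` added. -/
def addEdge {V : Type} (G : SimpleGraph V) (u v : V) : SimpleGraph V :=
  G ⊔ SimpleGraph.fromEdgeSet {s(u, v)}

/-- Restriction of a cut index set of `G` (a subset containing the base vertex `u`)
to a cut index set of the induced subgraph on `L`. -/
def resSub {V : Type} [DecidableEq V] (L : Finset V) (u : V) (hu : u ∈ L) :
    {A : Finset V // u ∈ A} → {B : Finset {x : V // x ∈ L} // ⟨u, hu⟩ ∈ B} :=
  fun A => ⟨A.1.subtype (· ∈ L), by simpa using A.2⟩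

lemma sep_resSub {V : Type} [DecidableEq V] (L : Finset V) (u : V) (huL : u ∈ L)
    (A : {A : Finset V // u ∈ A}) (e : Sym2 {x : V // x ∈ L}) :
    sep (resSub L u huL A).1 e = sep A.1 (Sym2.map Subtype.val e) := by
  induction e using Sym2.ind with
  | _ x y => simp [sep, resSub, Finset.mem_subtype]

lemma mem_iff_of_inter_eq {V : Type} [DecidableEq V] {A A' R : Finset V}
    (h : A ∩ R = A' ∩ R) {a : V} (ha : a ∈ R) : a ∈ A ↔ a ∈ A' := by
  constructor <;> intro hm
  · have h2 : a ∈ A' ∩ R := h ▸ Finset.mem_inter.mpr ⟨hm, ha⟩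
    exact (Finset.mem_inter.mp h2).1
  · have h2 : a ∈ A ∩ R := h.symm ▸ Finset.mem_inter.mpr ⟨hm, ha⟩
    exact (Finset.mem_inter.mp h2).1

lemma sep_eq_of_inter_eq {V : Type} [DecidableEq V] {A A' R : Finset V}
    (h : A ∩ R = A' ∩ R) {a b : V} (ha : a ∈ R) (hb : b ∈ R) :
    sep A s(a, b) = sep A' s(a, b) := by
  simp only [sep, Sym2.lift_mk]
  rw [decide_eq_decide.mpr (mem_iff_of_inter_eq h ha),
    decide_eq_decide.mpr (mem_iff_of_inter_eq h hb)]

/-- Lifting generators of the cut ideal of `G[L] + uv`: if the cut index sets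
`C₁, …, C_m` and `C₁', …, C_m'` of `G` agree on `R`, and the binomial of the
restrictions to `L` lies in the cut ideal of `G[L] + uv`, then the binomial
`∏ q_{Cᵢ} - ∏ q_{Cᵢ'}` lies in the cut ideal of `G`. -/
theorem lift_left_binomial_mem_cutIdeal
    (K : Type) [Field K] {V : Type} [Fintype V] [DecidableEq V]
    (G : SimpleGraph V) (u v : V) (huv : u ≠ v) (hadj : ¬ G.Adj u v)
    (L R : Finset V) (hLR : L ∪ R = Finset.univ) (hI : L ∩ R = {u, v})
    (huL : u ∈ L) (hvL : v ∈ L)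
    (hE : ∀ a b, G.Adj a b → (a ∈ L ∧ b ∈ L) ∨ (a ∈ R ∧ b ∈ R))
    (m : ℕ) (C C' : Fin m → {A : Finset V // u ∈ A})
    (hR : ∀ i, (C i).1 ∩ R = (C' i).1 ∩ R)
    (hmem : (∏ i, X (resSub L u huL (C i))) - (∏ i, X (resSub L u huL (C' i))) ∈
      cutIdeal K (addEdge (G.comap (Subtype.val : {x : V // x ∈ L} → V))
        ⟨u, huL⟩ ⟨v, hvL⟩) ⟨u, huL⟩) :
    (∏ i, X (C i)) - (∏ i, X (C' i)) ∈ cutIdeal K G u := by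
  classical
  set HL := addEdge (G.comap (Subtype.val : {x : V // x ∈ L} → V)) ⟨u, huL⟩ ⟨v, hvL⟩
    with hHL
  rw [cutIdeal, RingHom.mem_ker, map_sub, sub_eq_zero] at hmem ⊢
  simp only [cutMap, map_prod, aeval_X] at hmem ⊢
  have huR : u ∈ R := by
    have h2 : u ∈ L ∩ R := hI ▸ by simp
    exact (Finset.mem_inter.mp h2).2
  have hvR : v ∈ R := by
    have h2 : v ∈ L ∩ R := hI ▸ by simp
    exact (Finset.mem_inter.mp h2).2
  set EG := (Set.toFinite G.edgeSet).toFinset with hEGdef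
  set P : Sym2 V → Prop := fun e => ∀ x ∈ e, x ∈ L with hP
  -- split the product over edges into the `L` part and the `R` part
  have split : ∀ D : Fin m → {A : Finset V // u ∈ A},
      (∏ i, ∏ e ∈ EG, (X ((e, sep (D i).1 e)) : MvPolynomial (Sym2 V × Bool) K))
      = (∏ i, ∏ e ∈ EG.filter P, X ((e, sep (D i).1 e))) *
        (∏ i, ∏ e ∈ EG.filter (fun e => ¬ P e), X ((e, sep (D i).1 e))) := by
    intro D
    rw [← Finset.prod_mul_distrib]
    exact Finset.prod_congr rfl fun i _ =>
      (Finset.prod_filter_mul_prod_filter_not EG P _).symm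
  rw [split C, split C']
  -- the `R` parts agree
  have hRpart : (∏ i, ∏ e ∈ EG.filter (fun e => ¬ P e),
        (X ((e, sep (C i).1 e)) : MvPolynomial (Sym2 V × Bool) K))
      = ∏ i, ∏ e ∈ EG.filter (fun e => ¬ P e), X ((e, sep (C' i).1 e)) := by
    refine Finset.prod_congr rfl fun i _ => Finset.prod_congr rfl fun e he => ?_
    revert he
    induction e using Sym2.ind with
    | _ a b =>
      intro he
      simp only [Finset.mem_filter, Set.Finite.mem_toFinset, hEGdef] at he
      obtain ⟨heG, hnP⟩ := he
      have hadj' : G.Adj a b := (SimpleGraph.mem_edgeSet G).mp heG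
      rcases hE a b hadj' with ⟨h1, h2⟩ | ⟨h1, h2⟩
      · exact absurd (fun x hx => by
          rcases Sym2.mem_iff.mp hx with rfl | rfl <;> assumption) hnP
      · rw [sep_eq_of_inter_eq (hR i) h1 h2]
  rw [hRpart]
  congr 1
  -- now the `L` parts; transfer `hmem` along the renaming of variables
  have hinj : Function.Injective (Sym2.map (Subtype.val : {x : V // x ∈ L} → V)) :=
    Sym2.map.injective Subtype.val_injective
  have h2 := congrArg (rename (R := K)
    (Prod.map (Sym2.map (Subtype.val : {x : V // x ∈ L} → V)) id)) hmem
  simp only [map_prod, rename_X, Prod.map_apply, id, sep_resSub] at h2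
  -- reindex the inner product over the image
  have himg : ((Set.toFinite HL.edgeSet).toFinset).image
      (Sym2.map (Subtype.val : {x : V // x ∈ L} → V))
      = insert s(u, v) (EG.filter P) := by
    ext e
    simp only [Finset.mem_image, Set.Finite.mem_toFinset, Finset.mem_insert,
      Finset.mem_filter, hEGdef]
    constructor
    · rintro ⟨e', he', rfl⟩
      revert he'
      induction e' using Sym2.ind with
      | _ x y =>
        intro he'
        rw [SimpleGraph.mem_edgeSet] at he'
        rw [hHL, addEdge] at he'
        rcases he' with hxy | hxy
        · rw [SimpleGraph.comap_adj] at hxy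
          refine Or.inr ⟨(SimpleGraph.mem_edgeSet G).mpr (by simpa using hxy), ?_⟩
          intro z hz
          simp only [Sym2.map_pair_eq, Sym2.mem_iff] at hz
          rcases hz with rfl | rfl
          · exact x.2
          · exact y.2
        · rw [SimpleGraph.fromEdgeSet_adj] at hxy
          left
          have := hxy.1
          simp only [Set.mem_singleton_iff] at this
          calc Sym2.map Subtype.val s(x, y)
              = Sym2.map Subtype.val s((⟨u, huL⟩ : {x : V // x ∈ L}), ⟨v, hvL⟩) := by
                rw [this]
            _ = s(u, v) := by simp
    · rintro (rfl | ⟨heG, hPe⟩)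
      · refine ⟨s((⟨u, huL⟩ : {x : V // x ∈ L}), ⟨v, hvL⟩), ?_, by simp⟩
        rw [SimpleGraph.mem_edgeSet, hHL, addEdge]
        right
        rw [SimpleGraph.fromEdgeSet_adj]
        exact ⟨by simp, fun h => huv (congrArg Subtype.val h)⟩
      · revert heG hPe
        induction e using Sym2.ind with
        | _ a b =>
          intro heG hPe
          have haL : a ∈ L := hPe a (by simp)
          have hbL : b ∈ L := hPe b (by simp)
          refine ⟨s((⟨a, haL⟩ : {x : V // x ∈ L}), ⟨b, hbL⟩), ?_, by simp⟩
          rw [SimpleGraph.mem_edgeSet, hHL, addEdge]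
          left
          rw [SimpleGraph.comap_adj]
          exact (SimpleGraph.mem_edgeSet G).mp heG
  have hprodim : ∀ D : {A : Finset V // u ∈ A},
      (∏ e ∈ (Set.toFinite HL.edgeSet).toFinset,
        (X ((Sym2.map (Subtype.val : {x : V // x ∈ L} → V) e, sep D.1
          (Sym2.map Subtype.val e))) : MvPolynomial (Sym2 V × Bool) K))
      = X ((s(u, v), sep D.1 s(u, v))) * ∏ e ∈ EG.filter P, X ((e, sep D.1 e)) := by
    intro D
    have key := Finset.prod_image
      (f := fun e' : Sym2 V => (X ((e', sep D.1 e')) : MvPolynomial (Sym2 V × Bool) K))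
      (g := Sym2.map (Subtype.val : {x : V // x ∈ L} → V))
      (s := (Set.toFinite HL.edgeSet).toFinset)
      (fun x _ y _ h => hinj h)
    rw [← key, himg, Finset.prod_insert]
    simp only [Finset.mem_filter, Set.Finite.mem_toFinset, hEGdef,
      SimpleGraph.mem_edgeSet]
    exact fun h => hadj h.1
  simp only [hprodim] at h2
  rw [Finset.prod_mul_distrib, Finset.prod_mul_distrib] at h2
  have huvfac : (∏ i, (X ((s(u, v), sep (C i).1 s(u, v))) :
        MvPolynomial (Sym2 V × Bool) K))
      = ∏ i, X ((s(u, v), sep (C' i).1 s(u, v))) :=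
    Finset.prod_congr rfl fun i _ => by rw [sep_eq_of_inter_eq (hR i) huR hvR]
  rw [huvfac] at h2
  have hne : (∏ i, (X ((s(u, v), sep (C' i).1 s(u, v))) :
      MvPolynomial (Sym2 V × Bool) K)) ≠ 0 :=
    Finset.prod_ne_zero_iff.mpr fun i _ => X_ne_zero _
  exact mul_left_cancel₀ hne h2

end
end

section
/- Let P₄ be the path graph with vertex set {1, 2, 3, 4} and edges {1,2}, {2,3}, {3,4}. Then the cut ideal I_{P₄} is generated by polynomials of degree at most 2. -/
open MvPolynomial

noncomputable section

/-- The path graph `P₄` on vertices `0 - 1 - 2 - 3` (standing for `1 - 2 - 3 - 4`). -/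
def P4 : SimpleGraph (Fin 4) := SimpleGraph.fromEdgeSet {s(0, 1), s(1, 2), s(2, 3)}

namespace CutP4

abbrev B3 := Fin 3 → Bool

def col (u : B3) : (Fin 3 × Bool) →₀ ℕ := ∑ i, Finsupp.single (i, u i) 1

def kap (d : B3 →₀ ℕ) : (Fin 3 × Bool) →₀ ℕ := d.sum fun u k => k • col u

def deg (d : B3 →₀ ℕ) : ℕ := d.sum fun _ k => k

def DD (E : (Fin 3 × Bool) →₀ ℕ) : ℕ := E (0, true) + E (0, false)

def w (E : (Fin 3 × Bool) →₀ ℕ) (k : ℕ) : B3 := fun i => decide (DD E ≤ k + E (i, true))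

def nf' (E : (Fin 3 × Bool) →₀ ℕ) : B3 →₀ ℕ :=
  ∑ k ∈ Finset.range (DD E), Finsupp.single (w E k) 1

def wt (u : B3) : ℕ := (Finset.univ.filter fun i => u i = true).card

def Phi (d : B3 →₀ ℕ) : ℕ := d.sum fun u k => k * wt u ^ 2

def uinf (u v : B3) : B3 := fun i => u i && v i
def usup (u v : B3) : B3 := fun i => u i || v i

lemma col_apply (u : B3) (i : Fin 3) (b : Bool) :
    col u (i, b) = if u i = b then 1 else 0 := by
  classical
  rw [col, Finset.sum_apply']
  rw [Finset.sum_eq_single i]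
  · simp [Finsupp.single_apply, Prod.ext_iff]
  · intro j _ hj
    simp [Finsupp.single_apply, Prod.ext_iff, hj]
  · simp

lemma kap_add (a b : B3 →₀ ℕ) : kap (a + b) = kap a + kap b := by
  unfold kap
  rw [Finsupp.sum_add_index] <;> simp [add_smul]

lemma kap_single (u : B3) (k : ℕ) : kap (Finsupp.single u k) = k • col u := by
  unfold kap
  rw [Finsupp.sum_single_index]; simp

lemma deg_add (a b : B3 →₀ ℕ) : deg (a + b) = deg a + deg b := by
  unfold deg
  rw [Finsupp.sum_add_index] <;> simp

lemma deg_single (u : B3) (k : ℕ) : deg (Finsupp.single u k) = k := by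
  unfold deg; rw [Finsupp.sum_single_index]; rfl

lemma Phi_add (a b : B3 →₀ ℕ) : Phi (a + b) = Phi a + Phi b := by
  unfold Phi
  rw [Finsupp.sum_add_index] <;> simp [add_mul]

lemma Phi_single (u : B3) (k : ℕ) : Phi (Finsupp.single u k) = k * wt u ^ 2 := by
  unfold Phi; rw [Finsupp.sum_single_index]; simp

lemma kap_apply (d : B3 →₀ ℕ) (i : Fin 3) (b : Bool) :
    kap d (i, b) = ∑ u ∈ d.support, (if u i = b then d u else 0) := by
  classical
  rw [kap, Finsupp.sum, Finsupp.finset_sum_apply]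
  apply Finset.sum_congr rfl
  intro u _
  rw [Finsupp.smul_apply, col_apply]
  split <;> simp

lemma kap_coord_sum (d : B3 →₀ ℕ) (i : Fin 3) :
    kap d (i, true) + kap d (i, false) = deg d := by
  classical
  rw [kap_apply, kap_apply, ← Finset.sum_add_distrib, deg, Finsupp.sum]
  apply Finset.sum_congr rfl
  intro u _
  cases h : u i <;> simp [h]

lemma DD_kap (d : B3 →₀ ℕ) : DD (kap d) = deg d := kap_coord_sum d 0

lemma col_inf_sup (u v : B3) : col u + col v = col (uinf u v) + col (usup u v) := by
  unfold col
  rw [← Finset.sum_add_distrib, ← Finset.sum_add_distrib]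
  apply Finset.sum_congr rfl
  intro i _
  cases hu : u i <;> cases hv : v i <;> simp [uinf, usup, hu, hv, add_comm]

lemma wt_le (u : B3) : wt u ≤ 3 := by
  unfold wt
  calc (Finset.univ.filter fun i => u i = true).card ≤ (Finset.univ : Finset (Fin 3)).card :=
        Finset.card_le_card (Finset.filter_subset _ _)
    _ = 3 := by simp

lemma Phi_le (d : B3 →₀ ℕ) : Phi d ≤ deg d * 9 := by
  unfold Phi deg
  rw [Finsupp.sum, Finsupp.sum, Finset.sum_mul]
  apply Finset.sum_le_sum
  intro u _
  have h : wt u ^ 2 ≤ 9 := by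
    have := wt_le u
    nlinarith
  exact Nat.mul_le_mul_left _ h

lemma wt_inf_add_sup (u v : B3) : wt (uinf u v) + wt (usup u v) = wt u + wt v := by
  classical
  unfold wt uinf usup
  have h1 : (Finset.univ.filter fun i => (u i && v i) = true) =
      (Finset.univ.filter fun i => u i = true) ∩ (Finset.univ.filter fun i => v i = true) := by
    ext i; simp [Bool.and_eq_true]
  have h2 : (Finset.univ.filter fun i => (u i || v i) = true) =
      (Finset.univ.filter fun i => u i = true) ∪ (Finset.univ.filter fun i => v i = true) := by
    ext i; simp [Bool.or_eq_true]
  rw [h1, h2, Finset.card_inter_add_card_union]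

lemma wt_inf_lt (u v : B3) (h : ¬ ∀ i, u i = true → v i = true) : wt (uinf u v) < wt u := by
  classical
  push_neg at h
  obtain ⟨i, hui, hvi⟩ := h
  apply Finset.card_lt_card
  constructor
  · intro j hj
    simp only [Finset.mem_filter, uinf, Bool.and_eq_true] at hj ⊢
    exact ⟨hj.1, hj.2.1⟩
  · intro hsub
    have := hsub (by simp [hui] : i ∈ Finset.univ.filter fun j => u j = true)
    simp [uinf, hui] at this
    exact hvi this

def ule (u v : B3) : Prop := ∀ i, u i = true → v i = true

lemma exists_top (s : Finset B3) :
    s.Nonempty → (∀ u ∈ s, ∀ v ∈ s, ule u v ∨ ule v u) →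
    ∃ m ∈ s, ∀ v ∈ s, ule v m := by
  classical
  induction s using Finset.induction with
  | empty => intro hn; simp at hn
  | @insert a s ha ih =>
    intro _ hc
    by_cases hs : s.Nonempty
    · obtain ⟨m, hm, htop⟩ := ih hs (fun u hu v hv => hc u (Finset.mem_insert_of_mem hu)
        v (Finset.mem_insert_of_mem hv))
      rcases hc a (Finset.mem_insert_self _ _) m (Finset.mem_insert_of_mem hm) with h | h
      · exact ⟨m, Finset.mem_insert_of_mem hm, by
          intro v hv
          rcases Finset.mem_insert.1 hv with rfl | hv
          · exact h
          · exact htop v hv⟩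
      · exact ⟨a, Finset.mem_insert_self _ _, by
          intro v hv
          rcases Finset.mem_insert.1 hv with rfl | hv
          · intro i h; exact h
          · exact fun i hi => h i (htop v hv i hi)⟩
    · rw [Finset.not_nonempty_iff_eq_empty] at hs
      subst hs
      exact ⟨a, Finset.mem_insert_self _ _, by
        intro v hv
        rcases Finset.mem_insert.1 hv with rfl | hv
        · intro i h; exact h
        · simp at hv⟩


lemma deg_eq_zero (d : B3 →₀ ℕ) (h : deg d = 0) : d = 0 := by
  classical
  by_contra hd
  obtain ⟨u, hu⟩ : d.support.Nonempty := Finsupp.support_nonempty_iff.2 hd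
  have h1 : d u ≤ deg d := by
    rw [deg, Finsupp.sum]
    exact Finset.single_le_sum (fun _ _ => Nat.zero_le _) hu
  have := Finsupp.mem_support_iff.1 hu
  omega

lemma chain_nf_aux (N : ℕ) : ∀ d : B3 →₀ ℕ,
    (∀ u ∈ d.support, ∀ v ∈ d.support, ule u v ∨ ule v u) → deg d = N →
    nf' (kap d) = d := by
  classical
  induction N with
  | zero =>
    intro d _ hD
    have : d = 0 := deg_eq_zero d hD
    subst this
    simp [nf', kap, DD]
  | succ N ih =>
    intro d hc hD
    -- support is nonempty
    have hne : d.support.Nonempty := by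
      rw [Finsupp.support_nonempty_iff]
      intro h; subst h; simp [deg] at hD
    obtain ⟨m, hm, htop⟩ := exists_top d.support hne hc
    have hdm : 1 ≤ d m := Nat.one_le_iff_ne_zero.2 (Finsupp.mem_support_iff.1 hm)
    set d' : B3 →₀ ℕ := d - Finsupp.single m 1 with hd'
    have heq : d = d' + Finsupp.single m 1 := by
      ext v
      simp only [hd', Finsupp.add_apply, Finsupp.tsub_apply, Finsupp.single_apply]
      split_ifs with h
      · subst h; omega
      · omega
    have hsupp : d'.support ⊆ d.support := by
      intro v hv
      rw [Finsupp.mem_support_iff] at hv ⊢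
      intro h0
      rw [heq] at h0
      simp only [Finsupp.add_apply] at h0
      omega
    have hdeg' : deg d' = N := by
      have := deg_add d' (Finsupp.single m 1)
      rw [← heq, deg_single, hD] at this
      omega
    have hkap : kap d = kap d' + col m := by
      conv_lhs => rw [heq]
      rw [kap_add, kap_single, one_smul]
    have hDN : DD (kap d) = N + 1 := by rw [DD_kap, hD]
    have hDN' : DD (kap d') = N := by rw [DD_kap, hdeg']
    -- m i = false implies column i of kap d is 0
    have hzero : ∀ i : Fin 3, m i = false → kap d (i, true) = 0 := by
      intro i hmi
      rw [kap_apply]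
      apply Finset.sum_eq_zero
      intro u hu
      have : u i = true → m i = true := fun h => htop u hu i h
      split_ifs with h
      · rw [this h] at hmi; exact absurd hmi (by simp)
      · rfl
    have hcol : ∀ i : Fin 3, kap d (i, true) = kap d' (i, true) + (if m i = true then 1 else 0) := by
      intro i
      rw [hkap, Finsupp.add_apply, col_apply]
    have hIH : nf' (kap d') = d' := ih d' (fun u hu v hv => hc u (hsupp hu) v (hsupp hv)) hdeg'
    conv_rhs => rw [heq, ← hIH]
    rw [nf', nf', hDN, hDN', Finset.sum_range_succ]
    congr 1
    · apply Finset.sum_congr rfl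
      intro k hk
      have hkN : k < N := Finset.mem_range.1 hk
      congr 1
      funext i
      rw [w, w, hDN, hDN']
      rcases hmi : m i with _ | _
      · have h0 : kap d (i, true) = 0 := hzero i hmi
        have h0' : kap d' (i, true) = 0 := by
          have := hcol i; rw [hmi] at this; simpa [h0] using this.symm
        rw [h0, h0']
        simp only [decide_eq_decide]
        omega
      · have := hcol i
        rw [hmi, if_pos rfl] at this
        rw [this]
        simp only [decide_eq_decide]
        omega
    · congr 1
      funext i
      rw [w, hDN]
      rcases hmi : m i with _ | _
      · have h0 : kap d (i, true) = 0 := hzero i hmi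
        rw [h0]
        simp
      · have := hcol i
        rw [hmi, if_pos rfl] at this
        rw [this]
        simp

lemma chain_nf (d : B3 →₀ ℕ)
    (hc : ∀ u ∈ d.support, ∀ v ∈ d.support, ule u v ∨ ule v u) :
    nf' (kap d) = d := chain_nf_aux (deg d) d hc rfl


variable (K : Type) [Field K]

def psi : MvPolynomial B3 K →ₐ[K] MvPolynomial (Fin 3 × Bool) K :=
  aeval fun u : B3 => ∏ i, X (i, u i)

lemma prod_X_col (u : B3) :
    (∏ i, (X (i, u i) : MvPolynomial (Fin 3 × Bool) K)) = monomial (col u) 1 := by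
  rw [col, monomial_sum_one]
  apply Finset.prod_congr rfl
  intro i _
  rw [← X_pow_eq_monomial, pow_one]

def MD1 : MvPolynomial B3 K → MvPolynomial (Fin 3 × Bool) K :=
  AddMonoidAlgebra.mapDomain kap

def MD2 : MvPolynomial (Fin 3 × Bool) K → MvPolynomial B3 K :=
  AddMonoidAlgebra.mapDomain nf'

def MD3 : MvPolynomial B3 K → MvPolynomial B3 K :=
  AddMonoidAlgebra.mapDomain (fun d => nf' (kap d))

lemma MD_comp (p : MvPolynomial B3 K) : MD2 K (MD1 K p) = MD3 K p := by
  rw [MD1, MD2, MD3]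
  simp only [AddMonoidAlgebra.mapDomain, AddMonoidAlgebra.coeff_ofCoeff, ← Finsupp.mapDomain_comp]
  rfl

lemma MD1_monomial (d : B3 →₀ ℕ) (c : K) : MD1 K (monomial d c) = monomial (kap d) c := by
  rw [MD1, ← single_eq_monomial, ← single_eq_monomial]
  exact AddMonoidAlgebra.mapDomain_single

lemma MD3_monomial (d : B3 →₀ ℕ) (c : K) : MD3 K (monomial d c) = monomial (nf' (kap d)) c := by
  rw [MD3, ← single_eq_monomial, ← single_eq_monomial]
  exact AddMonoidAlgebra.mapDomain_single

lemma MD1_add (p q : MvPolynomial B3 K) : MD1 K (p + q) = MD1 K p + MD1 K q :=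
  AddMonoidAlgebra.mapDomain_add _ _ _

lemma MD3_add (p q : MvPolynomial B3 K) : MD3 K (p + q) = MD3 K p + MD3 K q :=
  AddMonoidAlgebra.mapDomain_add _ _ _

lemma MD2_zero : MD2 K (0 : MvPolynomial (Fin 3 × Bool) K) = 0 :=
  AddMonoidAlgebra.mapDomain_zero _

lemma psi_monomial (d : B3 →₀ ℕ) (c : K) :
    psi K (monomial d c) = monomial (kap d) c := by
  rw [psi, aeval_monomial]
  have h : (d.prod fun u k => (∏ i, (X (i, u i) : MvPolynomial (Fin 3 × Bool) K)) ^ k)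
      = monomial (kap d) 1 := by
    rw [kap, monomial_finsupp_sum_index, C_1, one_mul]
    apply Finsupp.prod_congr
    intro u _
    rw [prod_X_col, monomial_pow, one_pow]
  rw [h, algebraMap_eq, C_mul_monomial, mul_one]

lemma psi_eq_MD1 (p : MvPolynomial B3 K) : psi K p = MD1 K p := by
  induction p using MvPolynomial.induction_on' with
  | monomial d c => rw [psi_monomial, MD1_monomial]
  | add p q hp hq => rw [map_add, hp, hq, MD1_add]

def S0 : Set (MvPolynomial B3 K) :=
  {q | ∃ u v : B3, q = X u * X v - X (uinf u v) * X (usup u v)}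

lemma X_eq_monomial (a : B3) : (X a : MvPolynomial B3 K) = monomial (Finsupp.single a 1) 1 := by
  rw [← pow_one (X a), X_pow_eq_monomial]

lemma XX_eq (a b : B3) : (X a * X b : MvPolynomial B3 K)
    = monomial (Finsupp.single a 1 + Finsupp.single b 1) 1 := by
  rw [X_eq_monomial, X_eq_monomial, monomial_mul, one_mul]

lemma harith (m p q j s t : ℕ) (h1 : m + j = p + q) (h2 : p = m + 1 + s) (h3 : q = m + 1 + t) :
    p ^ 2 + q ^ 2 + 2 ≤ m ^ 2 + j ^ 2 := by
  have hj : j = m + 2 + s + t := by omega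
  subst h2 h3 hj
  ring_nf
  nlinarith [s * t]

lemma step (d : B3 →₀ ℕ)
    (h : ¬ ∀ u ∈ d.support, ∀ v ∈ d.support, ule u v ∨ ule v u) :
    ∃ d'' : B3 →₀ ℕ, deg d'' = deg d ∧ kap d'' = kap d ∧ Phi d + 2 ≤ Phi d'' ∧
      monomial d (1 : K) - monomial d'' 1 ∈ Ideal.span (S0 K) := by
  classical
  push_neg at h
  obtain ⟨u, hu, v, hv, huv, hvu⟩ := h
  have hneq : u ≠ v := by
    rintro rfl
    exact huv (fun i h => h)
  have hdu : 1 ≤ d u := Nat.one_le_iff_ne_zero.2 (Finsupp.mem_support_iff.1 hu)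
  have hdv : 1 ≤ d v := Nat.one_le_iff_ne_zero.2 (Finsupp.mem_support_iff.1 hv)
  set d' : B3 →₀ ℕ := d - Finsupp.single u 1 - Finsupp.single v 1 with hd'
  have heq : d = d' + (Finsupp.single u 1 + Finsupp.single v 1) := by
    ext x
    simp only [hd', Finsupp.add_apply, Finsupp.tsub_apply, Finsupp.single_apply]
    by_cases h1 : u = x <;> by_cases h2 : v = x
    · exact absurd (h1.trans h2.symm) hneq
    · subst h1; simp [h2]; omega
    · subst h2; simp [h1]; omega
    · simp [h1, h2]
  refine ⟨d' + (Finsupp.single (uinf u v) 1 + Finsupp.single (usup u v) 1), ?_, ?_, ?_, ?_⟩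
  · rw [heq]
    simp only [deg_add, deg_single]
  · rw [heq]
    simp only [kap_add, kap_single, one_smul]
    rw [← col_inf_sup]
  · rw [heq]
    simp only [Phi_add, Phi_single, one_mul]
    have hsum : wt (uinf u v) + wt (usup u v) = wt u + wt v := wt_inf_add_sup u v
    have hlt1 : wt (uinf u v) < wt u := wt_inf_lt u v huv
    have hlt2 : wt (uinf u v) < wt v := by
      have : uinf v u = uinf u v := by funext i; exact Bool.and_comm _ _
      exact this ▸ wt_inf_lt v u hvu
    have := harith (wt (uinf u v)) (wt u) (wt v) (wt (usup u v))
      (wt u - wt (uinf u v) - 1) (wt v - wt (uinf u v) - 1) (by omega) (by omega) (by omega)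
    omega
  · have hfac : ∀ a b : B3, monomial (d' + (Finsupp.single a 1 + Finsupp.single b 1)) (1 : K)
        = monomial d' 1 * (X a * X b) := by
      intro a b
      rw [XX_eq, monomial_mul, one_mul]
    rw [heq, hfac, hfac, ← mul_sub]
    exact Ideal.mul_mem_left _ _ (Ideal.subset_span ⟨u, v, rfl⟩)

lemma key_aux (μ : ℕ) : ∀ d : B3 →₀ ℕ, deg d * 9 - Phi d ≤ μ →
    monomial d (1 : K) - monomial (nf' (kap d)) 1 ∈ Ideal.span (S0 K) := by
  classical
  induction μ with
  | zero =>
    intro d hμ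
    by_cases hc : ∀ u ∈ d.support, ∀ v ∈ d.support, ule u v ∨ ule v u
    · rw [chain_nf d hc, sub_self]
      exact Ideal.zero_mem _
    · obtain ⟨d'', hdeg, hkap, hPhi, _⟩ := step K d hc
      have h1 : Phi d'' ≤ deg d'' * 9 := Phi_le d''
      omega
  | succ μ ih =>
    intro d hμ
    by_cases hc : ∀ u ∈ d.support, ∀ v ∈ d.support, ule u v ∨ ule v u
    · rw [chain_nf d hc, sub_self]
      exact Ideal.zero_mem _
    · obtain ⟨d'', hdeg, hkap, hPhi, hmem⟩ := step K d hc
      have h1 : Phi d'' ≤ deg d'' * 9 := Phi_le d''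
      have h2 : monomial d'' (1 : K) - monomial (nf' (kap d'')) 1 ∈ Ideal.span (S0 K) :=
        ih d'' (by omega)
      rw [hkap] at h2
      have := Ideal.add_mem _ hmem h2
      rw [sub_add_sub_cancel] at this
      exact this

lemma sub_MD3_mem (p : MvPolynomial B3 K) : p - MD3 K p ∈ Ideal.span (S0 K) := by
  induction p using MvPolynomial.induction_on' with
  | monomial d c =>
    rw [MD3_monomial]
    have : monomial d c - monomial (nf' (kap d)) c
        = C c * (monomial d (1 : K) - monomial (nf' (kap d)) 1) := by
      rw [mul_sub, C_mul_monomial, C_mul_monomial, mul_one]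
    rw [this]
    exact Ideal.mul_mem_left _ _ (key_aux K (deg d * 9 - Phi d) d le_rfl)
  | add p q hp hq =>
    rw [MD3_add, add_sub_add_comm]
    exact Ideal.add_mem _ hp hq

lemma ker_psi : RingHom.ker (psi K) = Ideal.span (S0 K) := by
  apply le_antisymm
  · intro p hp
    rw [RingHom.mem_ker] at hp
    have h1 : MD1 K p = 0 := by rw [← psi_eq_MD1, hp]
    have h2 : MD3 K p = 0 := by rw [← MD_comp, h1, MD2_zero]
    have := sub_MD3_mem K p
    rwa [h2, sub_zero] at this
  · rw [Ideal.span_le]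
    rintro q ⟨u, v, rfl⟩
    rw [SetLike.mem_coe, RingHom.mem_ker]
    have hXX : ∀ a b : B3, psi K (X a * X b : MvPolynomial B3 K)
        = monomial (col a + col b) 1 := by
      intro a b
      rw [XX_eq, psi_monomial, kap_add, kap_single, kap_single, one_smul, one_smul]
    rw [map_sub, hXX, hXX, col_inf_sup, sub_self]

def edge : Fin 3 → Sym2 (Fin 4) := ![s(0, 1), s(1, 2), s(2, 3)]

lemma edge_inj : Function.Injective edge := by decide

def gmap (p : Fin 3 × Bool) : Sym2 (Fin 4) × Bool := (edge p.1, p.2)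

lemma gmap_inj : Function.Injective gmap := by
  rintro ⟨i, b⟩ ⟨j, c⟩ h
  simp only [gmap, Prod.mk.injEq] at h
  exact Prod.ext (edge_inj h.1) h.2

lemma EF_eq : (Set.toFinite P4.edgeSet).toFinset = Finset.image edge Finset.univ := by
  ext e
  rw [Set.Finite.mem_toFinset]
  induction e using Sym2.ind with
  | _ a b =>
    rw [SimpleGraph.mem_edgeSet]
    simp only [P4, SimpleGraph.fromEdgeSet_adj, Set.mem_insert_iff, Set.mem_singleton_iff,
      Finset.mem_image, Finset.mem_univ, true_and]
    revert a b
    decide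

def cvec (v₀ : Fin 4) (A : {A : Finset (Fin 4) // v₀ ∈ A}) : B3 := fun i => sep A.1 (edge i)

lemma cvec_bij : ∀ v₀ : Fin 4, Function.Bijective (cvec v₀) := by decide

def cEquiv (v₀ : Fin 4) : {A : Finset (Fin 4) // v₀ ∈ A} ≃ B3 :=
  Equiv.ofBijective _ (cvec_bij v₀)

lemma cutMap_eq (v₀ : Fin 4) :
    cutMap K P4 v₀ =
      ((rename gmap).comp (psi K)).comp (rename (cvec v₀)) := by
  apply MvPolynomial.algHom_ext
  intro A
  simp only [cutMap, aeval_X, AlgHom.comp_apply, rename_X, psi, map_prod]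
  rw [EF_eq, Finset.prod_image (fun i _ j _ h => edge_inj h)]
  rfl

lemma mem_cutIdeal_iff (v₀ : Fin 4) (p : MvPolynomial {A : Finset (Fin 4) // v₀ ∈ A} K) :
    p ∈ cutIdeal K P4 v₀ ↔ rename (cvec v₀) p ∈ Ideal.span (S0 K) := by
  rw [← ker_psi, cutIdeal, RingHom.mem_ker, RingHom.mem_ker, cutMap_eq]
  simp only [AlgHom.comp_apply]
  constructor
  · intro h
    have := MvPolynomial.rename_injective gmap gmap_inj (by rw [h, map_zero] :
      rename gmap (psi K (rename (cvec v₀) p)) = rename gmap 0)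
    exact this
  · intro h
    rw [h, map_zero]

lemma cutIdeal_eq (v₀ : Fin 4) :
    cutIdeal K P4 v₀ =
      Ideal.span ((rename (cEquiv v₀).symm : MvPolynomial B3 K →ₐ[K] _) '' S0 K) := by
  have h2 : Ideal.span ((rename (cEquiv v₀).symm : MvPolynomial B3 K →ₐ[K] _) '' S0 K)
      = Ideal.map ((renameEquiv K (cEquiv v₀)).toRingEquiv.symm) (Ideal.span (S0 K)) := by
    rw [Ideal.map_span]
    rfl
  rw [h2, Ideal.map_symm]
  ext p
  rw [Ideal.mem_comap, mem_cutIdeal_iff]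
  rfl

end CutP4

open CutP4 in
/-- The cut ideal of the path graph `P₄` is generated by polynomials of degree at
most `2`. -/
theorem cutIdeal_P4_quadrics (K : Type) [Field K] (v₀ : Fin 4) :
    ∃ S : Set (MvPolynomial {A : Finset (Fin 4) // v₀ ∈ A} K),
      Ideal.span S = cutIdeal K P4 v₀ ∧ ∀ p ∈ S, p.totalDegree ≤ 2 := by
  refine ⟨(rename (cEquiv v₀).symm : MvPolynomial B3 K →ₐ[K] _) '' S0 K,
    (cutIdeal_eq K v₀).symm, ?_⟩
  rintro p ⟨q, ⟨u, v, rfl⟩, rfl⟩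
  calc (rename ⇑(cEquiv v₀).symm (X u * X v - X (uinf u v) * X (usup u v))).totalDegree
      ≤ (X u * X v - X (uinf u v) * X (usup u v) : MvPolynomial B3 K).totalDegree :=
        totalDegree_rename_le _ _
    _ ≤ 2 := by
        rw [sub_eq_add_neg]
        refine le_trans (totalDegree_add _ _) ?_
        rw [totalDegree_neg]
        have h1 : (X u * X v : MvPolynomial B3 K).totalDegree ≤ 2 := by
          refine le_trans (totalDegree_mul _ _) ?_
          rw [totalDegree_X, totalDegree_X]
        have h2 : (X (uinf u v) * X (usup u v) : MvPolynomial B3 K).totalDegree ≤ 2 := by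
          refine le_trans (totalDegree_mul _ _) ?_
          rw [totalDegree_X, totalDegree_X]
        exact max_le h1 h2

end
end
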